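/- arXiv:2601.09203 — 2 statements merged into one kernel-verified Lean document; each statement's English description precedes it below -/
import Mathlib

section
/- Let α, φ ∈ ℝ. In the setting of the spin singlet ρ = |ψ⟩⟨ψ|, |ψ⟩ = (|01⟩ − |10⟩)/√2 on ℂ²⊗ℂ², with 𝓑 the generalized Clauser–Horne operator for η_a = η_b = 0, α_a = α, α_b = −α and directions a = (1,0,0), a' = (0,1,0), b = (cos φ, sin φ, 0), b' = (−sin φ, cos φ, 0), the third cumulant κ₃ = ⟨𝓑³⟩ − 3⟨𝓑⟩⟨𝓑²⟩ + 2⟨𝓑⟩³ (where ⟨X⟩ = Tr(ρ·X)) satisfies |κ₃| ≤ (√6/9)·α⁶ for all φ, with equality attained at φ = arcsin(1/√3) − π/4. -/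
open Matrix Kronecker

noncomputable section

/-- The Pauli matrix σ₁. -/
def σ1 : Matrix (Fin 2) (Fin 2) ℂ := !![0, 1; 1, 0]

/-- The Pauli matrix σ₂. -/
def σ2 : Matrix (Fin 2) (Fin 2) ℂ := !![0, -Complex.I; Complex.I, 0]

/-- The Pauli matrix σ₃. -/
def σ3 : Matrix (Fin 2) (Fin 2) ℂ := !![1, 0; 0, -1]

/-- `σ · n = n₁σ₁ + n₂σ₂ + n₃σ₃` for a real vector `n ∈ ℝ³`. -/
def pauliDot (n : Fin 3 → ℝ) : Matrix (Fin 2) (Fin 2) ℂ :=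
  (n 0 : ℂ) • σ1 + (n 1 : ℂ) • σ2 + (n 2 : ℂ) • σ3

/-- Biased unsharp POVM element `E₊(n) = ((1+η)·I + α·σ·n)/2`. -/
def Eplus (η α : ℝ) (n : Fin 3 → ℝ) : Matrix (Fin 2) (Fin 2) ℂ :=
  ((1 / 2 : ℝ) : ℂ) • (((1 + η : ℝ) : ℂ) • (1 : Matrix (Fin 2) (Fin 2) ℂ)
    + (α : ℂ) • pauliDot n)

/-- The generalized Clauser–Horne operator on ℂ²⊗ℂ². -/
def CHop (ηa ηb αa αb : ℝ) (a a' b b' : Fin 3 → ℝ) :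
    Matrix (Fin 2 × Fin 2) (Fin 2 × Fin 2) ℂ :=
  Eplus ηa αa a ⊗ₖ Eplus ηb αb b - Eplus ηa αa a ⊗ₖ Eplus ηb αb b'
    + Eplus ηa αa a' ⊗ₖ Eplus ηb αb b + Eplus ηa αa a' ⊗ₖ Eplus ηb αb b'
    - ((1 + ηb : ℝ) : ℂ) • (Eplus ηa αa a' ⊗ₖ (1 : Matrix (Fin 2) (Fin 2) ℂ))
    - ((1 + ηa : ℝ) : ℂ) • ((1 : Matrix (Fin 2) (Fin 2) ℂ) ⊗ₖ Eplus ηb αb b)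
    + ((((1 + ηa) * (1 + ηb) - |αa * αb|) / 2 : ℝ) : ℂ) •
        (1 : Matrix (Fin 2 × Fin 2) (Fin 2 × Fin 2) ℂ)

end

noncomputable section

/-- The spin-singlet state vector `|ψ⟩ = (|01⟩ − |10⟩)/√2` on ℂ²⊗ℂ². -/
def singletVec : Fin 2 × Fin 2 → ℂ := fun i =>
  if i = (0, 1) then ((1 / Real.sqrt 2 : ℝ) : ℂ)
  else if i = (1, 0) then (-(1 / Real.sqrt 2 : ℝ) : ℂ) else 0

/-- The spin-singlet density matrix `ρ = |ψ⟩⟨ψ|`. -/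
def singletRho : Matrix (Fin 2 × Fin 2) (Fin 2 × Fin 2) ℂ :=
  Matrix.of fun i j => singletVec i * (starRingEnd ℂ) (singletVec j)

/-- The generalized CH operator with bias `0`, unsharpness `α, −α`, and directions
`a = (1,0,0)`, `a' = (0,1,0)`, `b = (cos φ, sin φ, 0)`, `b' = (−sin φ, cos φ, 0)`. -/
def Bop (α φ : ℝ) : Matrix (Fin 2 × Fin 2) (Fin 2 × Fin 2) ℂ :=
  CHop 0 0 α (-α) ![1, 0, 0] ![0, 1, 0] ![Real.cos φ, Real.sin φ, 0]
    ![-Real.sin φ, Real.cos φ, 0]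

end

noncomputable section

/-- The third cumulant `κ₃ = ⟨𝓑³⟩ − 3⟨𝓑⟩⟨𝓑²⟩ + 2⟨𝓑⟩³` of the generalized CH
operator in the spin-singlet state, with `⟨X⟩ = Tr(ρ·X)`. -/
def kappa3 (α φ : ℝ) : ℂ :=
  Matrix.trace (singletRho * Bop α φ ^ 3)
    - 3 * Matrix.trace (singletRho * Bop α φ) * Matrix.trace (singletRho * Bop α φ ^ 2)
    + 2 * Matrix.trace (singletRho * Bop α φ) ^ 3



noncomputable section CumulantAux

lemma Eplus00' (α : ℝ) (n : Fin 3 → ℝ) : Eplus 0 α n 0 0 = (1 + (α:ℂ)*(n 2))/2 := by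
  simp [Eplus, pauliDot, σ1, σ2, σ3, Matrix.one_apply]; ring
lemma Eplus01' (α : ℝ) (n : Fin 3 → ℝ) : Eplus 0 α n 0 1 = (α:ℂ)*((n 0) - (n 1)*Complex.I)/2 := by
  simp [Eplus, pauliDot, σ1, σ2, σ3, Matrix.one_apply]; ring
lemma Eplus10' (α : ℝ) (n : Fin 3 → ℝ) : Eplus 0 α n 1 0 = (α:ℂ)*((n 0) + (n 1)*Complex.I)/2 := by
  simp [Eplus, pauliDot, σ1, σ2, σ3, Matrix.one_apply]; ring
lemma Eplus11' (α : ℝ) (n : Fin 3 → ℝ) : Eplus 0 α n 1 1 = (1 - (α:ℂ)*(n 2))/2 := by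
  simp [Eplus, pauliDot, σ1, σ2, σ3, Matrix.one_apply]; ring

/-- The simplified matrix `M` with `Bop α φ = α² • M`. -/
def Mop (φ : ℝ) : Matrix (Fin 2 × Fin 2) (Fin 2 × Fin 2) ℂ := Matrix.of fun i j =>
  if i = j then -(1/2) else
  if i = ((0:Fin 2),(1:Fin 2)) ∧ j = ((1:Fin 2),(0:Fin 2)) then
    (-(Real.cos φ + Real.sin φ) + (Real.cos φ - Real.sin φ)*Complex.I)/2 else
  if i = ((1:Fin 2),(0:Fin 2)) ∧ j = ((0:Fin 2),(1:Fin 2)) then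
    (-(Real.cos φ + Real.sin φ) - (Real.cos φ - Real.sin φ)*Complex.I)/2 else 0

set_option maxHeartbeats 2000000 in
lemma Bop_eq (α φ : ℝ) : Bop α φ = ((α:ℂ)^2) • Mop φ := by
  have habs : |α * -α| = α * α := by
    rw [mul_neg, abs_neg, abs_mul_self]
  ext ⟨i,k⟩ ⟨j,l⟩
  fin_cases i <;> fin_cases k <;> fin_cases j <;> fin_cases l <;>
  · simp only [Bop, CHop, Eplus00', Eplus01', Eplus10', Eplus11', Mop, habs,
      Matrix.sub_apply, Matrix.add_apply,
      Matrix.smul_apply, Matrix.kroneckerMap_apply, Matrix.one_apply, Matrix.of_apply,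
      Matrix.cons_val', Matrix.cons_val_zero, Matrix.cons_val_one, Matrix.head_cons,
      Matrix.head_fin_const, Matrix.empty_val', Matrix.cons_val_fin_one,
      Prod.mk.injEq, smul_eq_mul, Fin.mk_zero, Fin.mk_one, Fin.isValue]
    norm_num
    push_cast
    ring_nf
    try simp only [Complex.I_sq]
    try ring_nf
    try norm_num

set_option maxHeartbeats 1000000 in
lemma traceM1 (φ : ℝ) : Matrix.trace (singletRho * Mop φ)
    = (((Real.cos φ + Real.sin φ) - 1)/2 : ℝ) := by
  simp only [Matrix.trace, Matrix.diag, Matrix.mul_apply, Fintype.sum_prod_type,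
    Fin.sum_univ_two, singletRho, singletVec, Mop, Matrix.of_apply]
  norm_num [Prod.ext_iff, Complex.ext_iff, Complex.sin_ofReal_re, Complex.sin_ofReal_im,
    Complex.cos_ofReal_re, Complex.cos_ofReal_im]
  constructor <;> ring_nf <;>
    try rw [Real.sq_sqrt (by norm_num : (0:ℝ) ≤ 2)]
  all_goals ring_nf
  all_goals nlinarith [Real.sin_sq_add_cos_sq φ]

set_option maxHeartbeats 2000000 in
lemma traceM2 (φ : ℝ) : Matrix.trace (singletRho * (Mop φ * Mop φ))
    = ((3/4 - (Real.cos φ + Real.sin φ)/2 : ℝ)) := by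
  simp only [Matrix.trace, Matrix.diag, Matrix.mul_apply, Fintype.sum_prod_type,
    Fin.sum_univ_two, singletRho, singletVec, Mop, Matrix.of_apply]
  norm_num [Prod.ext_iff, Complex.ext_iff, Complex.sin_ofReal_re, Complex.sin_ofReal_im,
    Complex.cos_ofReal_re, Complex.cos_ofReal_im]
  constructor <;> ring_nf <;>
    try rw [Real.sq_sqrt (by norm_num : (0:ℝ) ≤ 2)]
  all_goals ring_nf
  all_goals nlinarith [Real.sin_sq_add_cos_sq φ]

set_option maxHeartbeats 4000000 in
lemma traceM3 (φ : ℝ) : Matrix.trace (singletRho * (Mop φ * (Mop φ * Mop φ)))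
    = ((-7/8 + 5*(Real.cos φ + Real.sin φ)/8 : ℝ)) := by
  simp only [Matrix.trace, Matrix.diag, Matrix.mul_apply, Fintype.sum_prod_type,
    Fin.sum_univ_two, singletRho, singletVec, Mop, Matrix.of_apply]
  norm_num [Prod.ext_iff, Complex.ext_iff, Complex.sin_ofReal_re, Complex.sin_ofReal_im,
    Complex.cos_ofReal_re, Complex.cos_ofReal_im]
  constructor <;> ring_nf <;>
    try rw [Real.sq_sqrt (by norm_num : (0:ℝ) ≤ 2)]
  all_goals ring_nf
  all_goals linear_combination (Real.sin φ/4 + Real.cos φ/4 - 3/4) * Real.sin_sq_add_cos_sq φ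

lemma kappa3_eq (α φ : ℝ) : kappa3 α φ
    = ((-(α^6 * ((Real.cos φ + Real.sin φ) * (2 - (Real.cos φ + Real.sin φ)^2)) / 4) : ℝ) : ℂ) := by
  have h2 : Bop α φ ^ 2 = ((α:ℂ)^2)^2 • (Mop φ * Mop φ) := by
    rw [Bop_eq, smul_pow, pow_two (Mop φ)]
  have h3 : Bop α φ ^ 3 = ((α:ℂ)^2)^3 • (Mop φ * (Mop φ * Mop φ)) := by
    rw [Bop_eq, smul_pow, pow_succ' (Mop φ) 2, pow_two (Mop φ)]
  rw [kappa3, h2, h3, Bop_eq, Matrix.mul_smul, Matrix.mul_smul, Matrix.mul_smul,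
    Matrix.trace_smul, Matrix.trace_smul, Matrix.trace_smul,
    traceM1, traceM2, traceM3, smul_eq_mul, smul_eq_mul, smul_eq_mul]
  push_cast
  ring

lemma cumulant_aux_bound (t : ℝ) (ht : t^2 ≤ 2) :
    |t * (2 - t^2)| ≤ 4 * Real.sqrt 6 / 9 := by
  have hr : Real.sqrt 6 ^ 2 = 6 := Real.sq_sqrt (by norm_num)
  have hr0 : (0:ℝ) ≤ Real.sqrt 6 := Real.sqrt_nonneg 6
  have hr3 : Real.sqrt 6 ^ 3 = 6 * Real.sqrt 6 := by rw [pow_succ, hr]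
  have h1 : 0 ≤ t + 2 * Real.sqrt 6 / 3 := by nlinarith
  have h2' : 0 ≤ 2 * Real.sqrt 6 / 3 - t := by nlinarith
  have e1 : 4 * Real.sqrt 6 / 9 - t * (2 - t^2)
      = (t - Real.sqrt 6 / 3)^2 * (t + 2 * Real.sqrt 6 / 3) := by
    linear_combination (t/3 - 2 * Real.sqrt 6 / 27) * hr
  have e2 : t * (2 - t^2) + 4 * Real.sqrt 6 / 9
      = (t + Real.sqrt 6 / 3)^2 * (2 * Real.sqrt 6 / 3 - t) := by
    linear_combination (-t/3 - 2 * Real.sqrt 6 / 27) * hr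
  rw [abs_le]
  constructor
  · linarith [mul_nonneg (sq_nonneg (t + Real.sqrt 6 / 3)) h2', e2]
  · linarith [mul_nonneg (sq_nonneg (t - Real.sqrt 6 / 3)) h1, e1]

end CumulantAux

/-- The third cumulant of the CH operator in the spin singlet satisfies
`|κ₃| ≤ (√6/9)·α⁶` for all `φ`, with equality at `φ = arcsin(1/√3) − π/4`. -/
theorem singlet_CH_third_cumulant_bound (α φ : ℝ) :
    ‖kappa3 α φ‖ ≤ Real.sqrt 6 / 9 * α ^ 6 ∧
    ‖kappa3 α (Real.arcsin (1 / Real.sqrt 3) - Real.pi / 4)‖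
      = Real.sqrt 6 / 9 * α ^ 6 := by
  have hα : (0:ℝ) ≤ α ^ 6 := by positivity
  have habs : ∀ ψ : ℝ, ‖kappa3 α ψ‖
      = α^6 * |(Real.cos ψ + Real.sin ψ) * (2 - (Real.cos ψ + Real.sin ψ)^2)| / 4 := by
    intro ψ
    rw [kappa3_eq, Complex.norm_real, Real.norm_eq_abs, abs_neg, abs_div, abs_mul,
      abs_of_nonneg hα, abs_of_nonneg (by norm_num : (0:ℝ) ≤ (4:ℝ))]
  constructor
  · rw [habs]
    have ht : (Real.cos φ + Real.sin φ)^2 ≤ 2 := by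
      nlinarith [Real.sin_sq_add_cos_sq φ, sq_nonneg (Real.cos φ - Real.sin φ)]
    have := cumulant_aux_bound _ ht
    calc α^6 * |(Real.cos φ + Real.sin φ) * (2 - (Real.cos φ + Real.sin φ)^2)| / 4
        ≤ α^6 * (4 * Real.sqrt 6 / 9) / 4 := by
          gcongr
      _ = Real.sqrt 6 / 9 * α ^ 6 := by ring
  · set φ₀ := Real.arcsin (1 / Real.sqrt 3) - Real.pi / 4 with hφ₀
    have h3 : Real.sqrt 3 * Real.sqrt 3 = 3 := Real.mul_self_sqrt (by norm_num)
    have h2 : Real.sqrt 2 * Real.sqrt 2 = 2 := Real.mul_self_sqrt (by norm_num)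
    have h3pos : (0:ℝ) < Real.sqrt 3 := Real.sqrt_pos.mpr (by norm_num)
    have h2pos : (0:ℝ) < Real.sqrt 2 := Real.sqrt_pos.mpr (by norm_num)
    have h6 : Real.sqrt 6 = Real.sqrt 2 * Real.sqrt 3 := by
      rw [show (6:ℝ) = 2 * 3 by norm_num, Real.sqrt_mul (by norm_num)]
    have hb1 : (1 / Real.sqrt 3 : ℝ) ≤ 1 := by
      rw [div_le_one h3pos]; nlinarith
    have hb2 : (-1 : ℝ) ≤ 1 / Real.sqrt 3 := by
      have : (0:ℝ) ≤ 1 / Real.sqrt 3 := by positivity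
      linarith
    have hsin : Real.sin (φ₀ + Real.pi / 4) = 1 / Real.sqrt 3 := by
      rw [hφ₀, sub_add_cancel, Real.sin_arcsin hb2 hb1]
    rw [Real.sin_add, Real.sin_pi_div_four, Real.cos_pi_div_four] at hsin
    have ht0 : Real.cos φ₀ + Real.sin φ₀ = Real.sqrt 6 / 3 := by
      have key : (Real.cos φ₀ + Real.sin φ₀) * (Real.sqrt 2 / 2) = 1 / Real.sqrt 3 := by
        linear_combination hsin
      have h23 : Real.sqrt 6 / 3 * (Real.sqrt 2 / 2) = 1 / Real.sqrt 3 := by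
        rw [h6]
        field_simp
        nlinarith [h2, h3]
      exact mul_right_cancel₀ (by positivity : (Real.sqrt 2 / 2) ≠ 0) (key.trans h23.symm)
    rw [habs, ht0]
    have hsq : (Real.sqrt 6 / 3)^2 = 2/3 := by
      rw [div_pow, Real.sq_sqrt (by norm_num : (0:ℝ) ≤ 6)]; norm_num
    rw [hsq]
    rw [abs_of_nonneg (by positivity : (0:ℝ) ≤ Real.sqrt 6 / 3 * (2 - 2/3))]
    ring
end
end

section
/- Let α, a, t₁, t₂, t₃ ∈ ℝ and let ρ = (1/4)·(I⊗I + a·(σ₃⊗I) + a·(I⊗σ₃) + t₁·σ₁⊗σ₁ + t₂·σ₂⊗σ₂ + t₃·σ₃⊗σ₃) on ℂ²⊗ℂ². Let 𝓑 be the generalized Clauser–Horne operator with bias η_a = η_b = 0, unsharpness α_a = α, α_b = −α, and directions a⃗ = (0,0,1), a⃗' = (0,1,0), b⃗ = (0, 1/√2, −1/√2), b⃗' = (0, 1/√2, 1/√2). Then the fourth central moment μ₄ = Tr(ρ·(𝓑 − Tr(ρ·𝓑)·I)⁴) equals (α⁸/64)·(−3·(t₂ − t₃)⁴ + 4·(3·t₁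 − 1)·(t₂ − t₃)² + 8·(1 + t₁)), independently of a. -/
open Matrix Kronecker

noncomputable section

/-- The symmetric two-qubit X-state
`ρ = (I⊗I + a·σ₃⊗I + a·I⊗σ₃ + t₁·σ₁⊗σ₁ + t₂·σ₂⊗σ₂ + t₃·σ₃⊗σ₃)/4`. -/
def rhoX (a t1 t2 t3 : ℝ) : Matrix (Fin 2 × Fin 2) (Fin 2 × Fin 2) ℂ :=
  ((1 / 4 : ℝ) : ℂ) •
    ((1 : Matrix (Fin 2) (Fin 2) ℂ) ⊗ₖ (1 : Matrix (Fin 2) (Fin 2) ℂ)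
      + (a : ℂ) • (σ3 ⊗ₖ (1 : Matrix (Fin 2) (Fin 2) ℂ))
      + (a : ℂ) • ((1 : Matrix (Fin 2) (Fin 2) ℂ) ⊗ₖ σ3)
      + (t1 : ℂ) • (σ1 ⊗ₖ σ1) + (t2 : ℂ) • (σ2 ⊗ₖ σ2) + (t3 : ℂ) • (σ3 ⊗ₖ σ3))

/-- The generalized CH operator with bias `0`, unsharpness `α, −α`, and directions
`a⃗ = (0,0,1)`, `a⃗' = (0,1,0)`, `b⃗ = (0, 1/√2, −1/√2)`, `b⃗' = (0, 1/√2, 1/√2)`. -/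
def BopX (α : ℝ) : Matrix (Fin 2 × Fin 2) (Fin 2 × Fin 2) ℂ :=
  CHop 0 0 α (-α) ![0, 0, 1] ![0, 1, 0]
    ![0, 1 / Real.sqrt 2, -(1 / Real.sqrt 2)] ![0, 1 / Real.sqrt 2, 1 / Real.sqrt 2]

end

noncomputable section

/-- The fourth central moment `μ₄ = Tr(ρ·(𝓑 − Tr(ρ·𝓑)·I)⁴)` of the generalized CH
operator in the X-state. -/
def mu4X (α a t1 t2 t3 : ℝ) : ℂ :=
  Matrix.trace (rhoX a t1 t2 t3 *
    (BopX α - Matrix.trace (rhoX a t1 t2 t3 * BopX α) •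
      (1 : Matrix (Fin 2 × Fin 2) (Fin 2 × Fin 2) ℂ)) ^ 4)

-- auxiliary
private abbrev Mat4 := Matrix (Fin 2 × Fin 2) (Fin 2 × Fin 2) ℂ

private def CC : Mat4 := σ3 ⊗ₖ σ3 - σ2 ⊗ₖ σ2
private def K1 : Mat4 := σ1 ⊗ₖ σ1

private lemma s11 : σ1 * σ1 = 1 := by
  ext i j; fin_cases i <;> fin_cases j <;>
    simp [σ1, Matrix.mul_apply, Fin.sum_univ_two, Matrix.one_apply]

private lemma s22 : σ2 * σ2 = 1 := by
  ext i j; fin_cases i <;> fin_cases j <;>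
    simp [σ2, Matrix.mul_apply, Fin.sum_univ_two, Matrix.one_apply, Complex.I_mul_I]

private lemma s33 : σ3 * σ3 = 1 := by
  ext i j; fin_cases i <;> fin_cases j <;>
    simp [σ3, Matrix.mul_apply, Fin.sum_univ_two, Matrix.one_apply]

private lemma s32 : σ3 * σ2 = (-Complex.I) • σ1 := by
  ext i j; fin_cases i <;> fin_cases j <;>
    simp [σ1, σ2, σ3, Matrix.mul_apply, Fin.sum_univ_two]

private lemma s23 : σ2 * σ3 = Complex.I • σ1 := by
  ext i j; fin_cases i <;> fin_cases j <;>
    simp [σ1, σ2, σ3, Matrix.mul_apply, Fin.sum_univ_two]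

private lemma s31 : σ3 * σ1 = Complex.I • σ2 := by
  ext i j; fin_cases i <;> fin_cases j <;>
    simp [σ1, σ2, σ3, Matrix.mul_apply, Fin.sum_univ_two]

private lemma s13 : σ1 * σ3 = (-Complex.I) • σ2 := by
  ext i j; fin_cases i <;> fin_cases j <;>
    simp [σ1, σ2, σ3, Matrix.mul_apply, Fin.sum_univ_two]

private lemma s21 : σ2 * σ1 = (-Complex.I) • σ3 := by
  ext i j; fin_cases i <;> fin_cases j <;>
    simp [σ1, σ2, σ3, Matrix.mul_apply, Fin.sum_univ_two]

private lemma s12 : σ1 * σ2 = Complex.I • σ3 := by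
  ext i j; fin_cases i <;> fin_cases j <;>
    simp [σ1, σ2, σ3, Matrix.mul_apply, Fin.sum_univ_two]

private lemma hKK : K1 * K1 = 1 := by
  rw [K1, ← Matrix.mul_kronecker_mul, s11, Matrix.one_kronecker_one]

private lemma hCK : CC * K1 = CC := by
  rw [CC, K1]
  simp only [sub_mul, ← Matrix.mul_kronecker_mul, s31, s21,
    Matrix.smul_kronecker, Matrix.kronecker_smul, smul_smul]
  rw [show Complex.I * Complex.I = -1 from Complex.I_mul_I,
    show -Complex.I * -Complex.I = -1 by rw [neg_mul_neg, Complex.I_mul_I]]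
  module

private lemma hKC : K1 * CC = CC := by
  rw [CC, K1]
  simp only [mul_sub, ← Matrix.mul_kronecker_mul, s13, s12,
    Matrix.smul_kronecker, Matrix.kronecker_smul, smul_smul]
  rw [show Complex.I * Complex.I = -1 from Complex.I_mul_I,
    show -Complex.I * -Complex.I = -1 by rw [neg_mul_neg, Complex.I_mul_I]]
  module

private lemma hCC : CC * CC = (2 : ℂ) • 1 + (2 : ℂ) • K1 := by
  rw [CC, K1]
  simp only [sub_mul, mul_sub, ← Matrix.mul_kronecker_mul, s33, s22, s32, s23,
    Matrix.one_kronecker_one, Matrix.smul_kronecker, Matrix.kronecker_smul, smul_smul]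
  rw [show Complex.I * Complex.I = -1 from Complex.I_mul_I,
    show -Complex.I * -Complex.I = -1 by rw [neg_mul_neg, Complex.I_mul_I]]
  module

private lemma pd_a : pauliDot ![0, 0, 1] = σ3 := by
  simp [pauliDot]

private lemma pd_a' : pauliDot ![0, 1, 0] = σ2 := by
  simp [pauliDot]

private lemma pd_b : pauliDot ![0, 1 / Real.sqrt 2, -(1 / Real.sqrt 2)]
    = ((1 / Real.sqrt 2 : ℝ) : ℂ) • σ2 + (-((1 / Real.sqrt 2 : ℝ) : ℂ)) • σ3 := by
  simp [pauliDot]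

private lemma pd_b' : pauliDot ![0, 1 / Real.sqrt 2, 1 / Real.sqrt 2]
    = ((1 / Real.sqrt 2 : ℝ) : ℂ) • σ2 + ((1 / Real.sqrt 2 : ℝ) : ℂ) • σ3 := by
  simp [pauliDot]

private lemma Eplus_zero (α : ℝ) (n : Fin 3 → ℝ) :
    Eplus 0 α n = ((1 / 2 : ℝ) : ℂ) • ((1 : Matrix (Fin 2) (Fin 2) ℂ)
      + (α : ℂ) • pauliDot n) := by
  simp [Eplus]

private lemma hB (α : ℝ) :
    BopX α = ((α : ℂ) ^ 2 / 2) •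
      (((1 / Real.sqrt 2 : ℝ) : ℂ) • CC - 1) := by
  have habs : |α * -α| = α ^ 2 := by
    rw [mul_neg, abs_neg, ← sq, abs_pow, sq_abs]
  rw [BopX, CHop, Eplus_zero, Eplus_zero, Eplus_zero, Eplus_zero, pd_a, pd_a', pd_b, pd_b', CC]
  push_cast [habs]
  simp only [smul_add, Matrix.add_kronecker, Matrix.kronecker_add,
    Matrix.smul_kronecker, Matrix.kronecker_smul, Matrix.one_kronecker_one, smul_smul]
  module

private lemma trS1 : Matrix.trace σ1 = 0 := by simp [σ1, Matrix.trace_fin_two]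
private lemma trS2 : Matrix.trace σ2 = 0 := by simp [σ2, Matrix.trace_fin_two]
private lemma trS3 : Matrix.trace σ3 = 0 := by simp [σ3, Matrix.trace_fin_two]

private lemma trRho (a t1 t2 t3 : ℝ) : Matrix.trace (rhoX a t1 t2 t3) = 1 := by
  simp only [rhoX, Matrix.trace_smul, Matrix.trace_add, Matrix.trace_kronecker,
    trS1, trS2, trS3, Matrix.trace_one, Matrix.one_kronecker_one]
  push_cast
  simp

private lemma trRhoK (a t1 t2 t3 : ℝ) :
    Matrix.trace (rhoX a t1 t2 t3 * K1) = (t1 : ℂ) := by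
  rw [rhoX, K1, Matrix.smul_mul]
  simp only [add_mul, smul_mul_assoc, ← Matrix.mul_kronecker_mul, s11, s21, s31,
    Matrix.one_mul, Matrix.smul_kronecker, Matrix.kronecker_smul, smul_smul,
    Matrix.one_kronecker_one]
  simp only [Matrix.trace_smul, Matrix.trace_add, Matrix.trace_kronecker,
    trS1, trS2, trS3, Matrix.trace_one]
  push_cast
  simp
  ring

private lemma trRhoC (a t1 t2 t3 : ℝ) :
    Matrix.trace (rhoX a t1 t2 t3 * CC) = (t3 : ℂ) - (t2 : ℂ) := by
  rw [rhoX, CC, Matrix.smul_mul]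
  simp only [mul_sub, add_mul, smul_mul_assoc, ← Matrix.mul_kronecker_mul,
    s11, s22, s33, s12, s13, s21, s23, s31, s32,
    Matrix.one_mul, Matrix.mul_one, Matrix.smul_kronecker, Matrix.kronecker_smul, smul_smul,
    Matrix.one_kronecker_one]
  simp only [Matrix.trace_smul, Matrix.trace_add, Matrix.trace_sub, Matrix.trace_kronecker,
    trS1, trS2, trS3, Matrix.trace_one]
  push_cast
  simp
  ring

/-- Fourth central moment of the CH operator in the X-state:
`μ₄ = (α⁸/64)·(−3(t₂−t₃)⁴ + 4(3t₁−1)(t₂−t₃)² + 8(1+t₁))`, independently of `a`. -/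
theorem xstate_CH_fourth_central_moment (α a t1 t2 t3 : ℝ) :
    mu4X α a t1 t2 t3
      = ((α ^ 8 / 64 *
          (-3 * (t2 - t3) ^ 4 + 4 * (3 * t1 - 1) * (t2 - t3) ^ 2
            + 8 * (1 + t1)) : ℝ) : ℂ) := by
  have hs0 : Real.sqrt 2 ≠ 0 := by positivity
  have hs0' : ((Real.sqrt 2 : ℝ) : ℂ) ≠ 0 := by exact_mod_cast hs0
  have hs2 : ((Real.sqrt 2 : ℝ) : ℂ) ^ 2 = 2 := by
    norm_cast
    rw [Real.sq_sqrt] <;> norm_num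
  set s : ℂ := ((Real.sqrt 2 : ℝ) : ℂ) with hsdef
  set d : ℂ := (t3 : ℂ) - (t2 : ℂ) with hd
  have hm : Matrix.trace (rhoX a t1 t2 t3 * BopX α)
      = ((α : ℂ) ^ 2 / 2) * ((1 / s) * d - 1) := by
    rw [hB, Matrix.mul_smul, Matrix.trace_smul, Matrix.mul_sub, Matrix.mul_smul,
      Matrix.trace_sub, Matrix.trace_smul, Matrix.mul_one, trRhoC, trRho]
    simp only [smul_eq_mul]
    push_cast
    ring
  have hdiff : BopX α - Matrix.trace (rhoX a t1 t2 t3 * BopX α) •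
      (1 : Matrix (Fin 2 × Fin 2) (Fin 2 × Fin 2) ℂ)
      = ((α : ℂ) ^ 2 / (2 * s)) • (CC - d • 1) := by
    rw [hm, hB]
    push_cast
    match_scalars <;> field_simp <;> ring
  have hN2 : (CC - d • 1) ^ 2 = (d ^ 2 + 2) • (1 : Mat4) + (2 : ℂ) • K1 - (2 * d) • CC := by
    rw [sq]
    simp only [sub_mul, mul_sub, smul_mul_assoc, mul_smul_comm, mul_one, one_mul,
      smul_smul, hCC]
    module
  have hN4 : (CC - d • 1) ^ 4
      = (d ^ 4 + 12 * d ^ 2 + 8) • (1 : Mat4) + (12 * d ^ 2 + 8) • K1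
        - (4 * d ^ 3 + 16 * d) • CC := by
    rw [show (4:ℕ) = 2*2 from rfl, pow_mul, hN2, sq]
    simp only [add_mul, mul_add, sub_mul, mul_sub, smul_mul_assoc, mul_smul_comm,
      mul_one, one_mul, smul_smul, hCC, hCK, hKC, hKK]
    module
  rw [mu4X, hdiff, smul_pow, Matrix.mul_smul, Matrix.trace_smul, hN4]
  rw [Matrix.mul_sub, Matrix.mul_add, Matrix.mul_smul, Matrix.mul_smul, Matrix.mul_smul,
    Matrix.trace_sub, Matrix.trace_add, Matrix.trace_smul, Matrix.trace_smul,
    Matrix.trace_smul, Matrix.mul_one, trRho, trRhoK, trRhoC]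
  have hpow : ((α : ℂ) ^ 2 / (2 * s)) ^ 4 = (α : ℂ) ^ 8 / 64 := by
    have hs4 : s ^ 4 = 4 := by
      rw [show (4 : ℕ) = 2 * 2 from rfl, pow_mul, hs2]; norm_num
    field_simp
    rw [hs4]
    ring
  rw [hpow, hd]
  simp only [smul_eq_mul]
  push_cast
  ring

end
end
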